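/- For every n ≥ 1, the edge set of Q_n can be partitioned into 2^(n-1) paths of length n, each joining a pair of antipodal vertices. -/

import Mathlib

open Finset

/-- The `n`-dimensional hypercube graph on `{0,1}^n`: two vertices are adjacent
iff they differ in exactly one coordinate. -/
def Q (n : ℕ) : SimpleGraph (Fin n → ZMod 2) where
  Adj x y := hammingDist x y = 1
  symm := ⟨fun x y h => by simpa [hammingDist_comm] using h⟩
  loopless := ⟨fun x h => by simp [hammingDist_self] at h⟩

namespace APD

variable {n : ℕ}

def F (q : Fin n → ZMod 2) (j : ℕ) : Fin n → ZMod 2 :=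
  fun i => q i + if (i : ℕ) < j then 1 else 0

lemma F_zero (q : Fin n → ZMod 2) : F q 0 = q := by
  funext i; simp [F]

lemma add_self (a : ZMod 2) : a + a = 0 := by
  rw [← two_mul]; exact (mul_eq_zero_of_left (by decide) a)

lemma F_apply_step (q : Fin n → ZMod 2) (j : ℕ) (i : Fin n) :
    F q (j+1) i = F q j i + if (i : ℕ) = j then 1 else 0 := by
  rcases lt_trichotomy (i : ℕ) j with h | h | h
  · simp [F, h, Nat.lt_succ_of_lt h, Nat.ne_of_lt h]
  · simp [F, h]
  · simp [F, Nat.not_lt_of_lt h, Nat.lt_irrefl, (Nat.succ_le_of_lt h).not_gt,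
      (Nat.ne_of_lt h).symm]

lemma F_F (a : Fin n → ZMod 2) (j : ℕ) : F (F a j) j = a := by
  funext i
  show a i + _ + _ = a i
  rw [add_assoc, add_self, add_zero]

lemma adj_F (q : Fin n → ZMod 2) {j : ℕ} (hj : j < n) :
    (Q n).Adj (F q j) (F q (j+1)) := by
  show hammingDist (F q j) (F q (j+1)) = 1
  have : ({i | F q j i ≠ F q (j+1) i} : Finset (Fin n)) = {⟨j, hj⟩} := by
    ext i
    simp only [mem_filter, mem_univ, true_and, Finset.mem_singleton]
    rw [F_apply_step]
    constructor
    · intro h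
      by_contra hne
      have : (i : ℕ) ≠ j := fun hh => hne (Fin.ext hh)
      simp [this] at h
    · rintro rfl
      simp
  rw [hammingDist, this, Finset.card_singleton]

lemma F_inj (q : Fin n → ZMod 2) {k l : ℕ} (hk : k ≤ n) (hl : l ≤ n)
    (h : F q k = F q l) : k = l := by
  by_contra hne
  wlog hkl : k < l generalizing k l
  · exact this hl hk h.symm (Ne.symm hne) (lt_of_le_of_ne (not_lt.mp hkl) (Ne.symm hne))
  have hk' : k < n := lt_of_lt_of_le hkl hl
  have := congrFun h ⟨k, hk'⟩
  simp [F, Nat.lt_irrefl, hkl] at this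

def walk (q : Fin n → ZMod 2) : (k : ℕ) → k ≤ n → (Q n).Walk q (F q k)
  | 0, _ => SimpleGraph.Walk.nil.copy rfl (F_zero q).symm
  | k+1, h => (walk q k (Nat.le_of_succ_le h)).concat (adj_F q h)

lemma walk_edges (q : Fin n → ZMod 2) (k : ℕ) (h : k ≤ n) :
    (walk q k h).edges = (List.range k).map (fun j => s(F q j, F q (j+1))) := by
  induction k with
  | zero => simp [walk]
  | succ k ih =>
    rw [walk, SimpleGraph.Walk.edges_concat, ih (Nat.le_of_succ_le h), List.range_succ]
    simp

lemma walk_support (q : Fin n → ZMod 2) (k : ℕ) (h : k ≤ n) :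
    (walk q k h).support = (List.range (k+1)).map (F q) := by
  induction k with
  | zero => simp [walk, List.range_succ, F_zero]
  | succ k ih =>
    rw [walk, SimpleGraph.Walk.support_concat, ih (Nat.le_of_succ_le h)]
    simp [List.range_succ]

lemma walk_length (q : Fin n → ZMod 2) (k : ℕ) (h : k ≤ n) :
    (walk q k h).length = k := by
  induction k with
  | zero => simp [walk]
  | succ k ih => rw [walk, SimpleGraph.Walk.length_concat, ih (Nat.le_of_succ_le h)]

lemma walk_isPath (q : Fin n → ZMod 2) (k : ℕ) (h : k ≤ n) :
    (walk q k h).IsPath := by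
  rw [SimpleGraph.Walk.isPath_def, walk_support]
  refine List.Nodup.map_on ?_ List.nodup_range
  intro a ha b hb hab
  rw [List.mem_range] at ha hb
  exact F_inj q (le_trans (Nat.lt_succ_iff.mp ha) h) (le_trans (Nat.lt_succ_iff.mp hb) h) hab

lemma hamming_F_n (q : Fin n → ZMod 2) : hammingDist q (F q n) = n := by
  have : ({i | q i ≠ F q n i} : Finset (Fin n)) = univ := by
    ext i
    simp [F, i.isLt]
  rw [hammingDist, this, Finset.card_univ, Fintype.card_fin]

lemma step_diff (q : Fin n → ZMod 2) (j : ℕ) (i : Fin n) :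
    F q (j+1) i + F q j i = if (i : ℕ) = j then 1 else 0 := by
  rw [F_apply_step, add_comm (F q j i), add_assoc, add_self, add_zero]

lemma indicator_eval {j j' : ℕ} (hj : j < n)
    (h : ∀ i : Fin n, (if (i:ℕ) = j then (1:ZMod 2) else 0) = if (i:ℕ) = j' then 1 else 0) :
    j = j' := by
  have := h ⟨j, hj⟩
  by_contra hne
  simp [hne] at this

lemma coord_eq {q q' : Fin n → ZMod 2} {j j' : ℕ} (hj : j < n)
    (h : ∀ i : Fin n, F q (j+1) i + F q j i = F q' (j'+1) i + F q' j' i) : j = j' := by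
  refine indicator_eval hj fun i => ?_
  rw [← step_diff q j i, ← step_diff q' j' i, h]

lemma sum_ind {j : ℕ} (hj : j < n) :
    (∑ i : Fin n, if (i:ℕ) = j then (1:ZMod 2) else 0) = 1 := by
  have : ∀ i : Fin n, ((i:ℕ) = j) = (i = ⟨j, hj⟩) := by
    intro i; simp [Fin.ext_iff]
  simp only [this]
  rw [Finset.sum_ite_eq' univ (⟨j, hj⟩ : Fin n) (fun _ => (1:ZMod 2))]
  simp

lemma cross_parity {q q' : Fin n → ZMod 2} {j : ℕ} (hj : j < n)
    (hq : ∑ i, q i = 0) (hq' : ∑ i, q' i = 0)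
    (h : F q j = F q' (j+1)) : False := by
  have hstep : ∀ i : Fin n, q' i = q i + if (i:ℕ) = j then 1 else 0 := by
    intro i
    have h3 : q i + (if (i:ℕ) < j then (1:ZMod 2) else 0) =
        (q' i + if (i:ℕ) < j then 1 else 0) + (if (i:ℕ) = j then 1 else 0) :=
      (congrFun h i).trans (F_apply_step q' j i)
    have h4 : q i + (if (i:ℕ) < j then (1:ZMod 2) else 0) =
        (q' i + if (i:ℕ) = j then 1 else 0) + (if (i:ℕ) < j then 1 else 0) :=
      h3.trans (add_right_comm _ _ _)
    have h5 : q i = q' i + if (i:ℕ) = j then 1 else 0 := add_right_cancel h4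
    rw [h5, add_assoc, add_self, add_zero]
  have : (0 : ZMod 2) = 1 := by
    calc (0:ZMod 2) = ∑ i, q' i := hq'.symm
      _ = ∑ i, (q i + if (i:ℕ) = j then 1 else 0) :=
          Finset.sum_congr rfl fun i _ => hstep i
      _ = (∑ i, q i) + ∑ i : Fin n, (if (i:ℕ) = j then (1:ZMod 2) else 0) :=
          Finset.sum_add_distrib
      _ = 1 := by rw [hq, sum_ind hj, zero_add]
  exact absurd this (by decide)

lemma straight_eq {q q' : Fin n → ZMod 2} {j : ℕ} (h : F q j = F q' j) : q = q' := by
  funext i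
  exact add_right_cancel (b := if (i:ℕ) < j then (1:ZMod 2) else 0) (congrFun h i)

lemma key {q q' : Fin n → ZMod 2} (hq : ∑ i, q i = 0) (hq' : ∑ i, q' i = 0)
    {j j' : ℕ} (hj : j < n) (hj' : j' < n)
    (h : s(F q j, F q (j+1)) = s(F q' j', F q' (j'+1))) : q = q' := by
  rw [Sym2.eq_iff] at h
  rcases h with ⟨h1, h2⟩ | ⟨h1, h2⟩
  · have hjj : j = j' := coord_eq hj fun i => by
      rw [congrFun h1 i, congrFun h2 i]
    subst hjj
    exact straight_eq h1
  · have hjj : j = j' := coord_eq hj fun i => by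
      rw [congrFun h1 i, congrFun h2 i, add_comm]
    subst hjj
    exact absurd h1 (fun hh => cross_parity hj hq hq' hh)

def parityEquiv (m : ℕ) :
    {q : Fin (m+1) → ZMod 2 // ∑ i, q i = 0} ≃ (Fin m → ZMod 2) where
  toFun q := q.1 ∘ Fin.castSucc
  invFun p := ⟨Fin.snoc p (∑ i, p i), by
    rw [Fin.sum_univ_castSucc]
    simp [add_self]⟩
  left_inv := by
    rintro ⟨q, hq⟩
    ext i
    refine Fin.lastCases ?_ ?_ i
    · simp only [Fin.snoc_last]
      rw [Fin.sum_univ_castSucc] at hq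
      calc ∑ i : Fin m, (q ∘ Fin.castSucc) i = ∑ i : Fin m, q i.castSucc := rfl
        _ = (∑ i : Fin m, q i.castSucc) + 0 := (add_zero _).symm
        _ = (∑ i : Fin m, q i.castSucc) + (q (Fin.last m) + q (Fin.last m)) := by
            rw [add_self]
        _ = ((∑ i : Fin m, q i.castSucc) + q (Fin.last m)) + q (Fin.last m) :=
            (add_assoc _ _ _).symm
        _ = 0 + q (Fin.last m) := by rw [hq]
        _ = q (Fin.last m) := zero_add _
    · intro i; simp
  right_inv := by
    intro p; funext i; simp

lemma card_parity (hn : 1 ≤ n) :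
    Nat.card {q : Fin n → ZMod 2 // ∑ i, q i = 0} = 2 ^ (n-1) := by
  obtain ⟨m, rfl⟩ : ∃ m, n = m + 1 := ⟨n - 1, (Nat.succ_pred_eq_of_pos hn).symm⟩
  rw [Nat.card_congr (parityEquiv m)]
  simp [Nat.card_eq_fintype_card]

lemma mem_walk_iff (q : Fin n → ZMod 2) (e : Sym2 (Fin n → ZMod 2)) :
    e ∈ (walk q n le_rfl).edges ↔ ∃ j < n, s(F q j, F q (j+1)) = e := by
  rw [walk_edges]
  simp [List.mem_map, List.mem_range, eq_comm]

end APD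

open APD
theorem antipodal_path_decomposition (n : ℕ) (hn : 1 ≤ n) :
    ∃ (ι : Type) (u v : ι → (Fin n → ZMod 2)) (w : ∀ i : ι, (Q n).Walk (u i) (v i)),
      Nat.card ι = 2 ^ (n - 1) ∧
      (∀ i, (w i).IsPath ∧ (w i).length = n ∧ hammingDist (u i) (v i) = n) ∧
      ∀ e ∈ (Q n).edgeSet, ∃! i, e ∈ (w i).edges := by
  refine ⟨{q : Fin n → ZMod 2 // ∑ i, q i = 0}, fun i => i.1, fun i => F i.1 n,
    fun i => walk i.1 n le_rfl, card_parity hn, ?_, ?_⟩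
  · exact fun i => ⟨walk_isPath i.1 n le_rfl, walk_length i.1 n le_rfl, hamming_F_n i.1⟩
  · intro e he
    induction e using Sym2.ind with
    | _ a b =>
    rw [SimpleGraph.mem_edgeSet] at he
    -- he : hammingDist a b = 1
    obtain ⟨j0, hj0⟩ := (Finset.card_eq_one (s := Finset.univ.filter fun i => a i ≠ b i)).mp he
    have hdiff : ∀ i : Fin n, a i ≠ b i ↔ i = j0 := by
      intro i
      have := Finset.ext_iff.mp hj0 i
      simpa using this
    set j : ℕ := (j0 : ℕ) with hjdef
    have hj : j < n := j0.isLt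
    have hzm : ∀ x y : ZMod 2, x ≠ y ↔ y = x + 1 := by decide
    have hb : ∀ i : Fin n, b i = a i + if (i:ℕ) = j then 1 else 0 := by
      intro i
      by_cases hij : i = j0
      · subst hij
        have : a i ≠ b i := (hdiff i).mpr rfl
        simp only [hjdef, if_pos rfl]
        exact (hzm _ _).mp this
      · have : a i = b i := by
          by_contra hne
          exact hij ((hdiff i).mp hne)
        have hij' : (i:ℕ) ≠ j := fun hh => hij (Fin.ext hh)
        simp [hij', ← this]
    have key_mem : ∀ (q : Fin n → ZMod 2) (hq : ∑ i, q i = 0),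
        s(F q j, F q (j+1)) = s(a, b) →
        s(a, b) ∈ (walk q n le_rfl).edges := by
      intro q hq hqe
      exact (mem_walk_iff q _).mpr ⟨j, hj, hqe⟩
    -- the two candidate starting points
    set q0 : Fin n → ZMod 2 := F a j with hq0def
    have hFa : F q0 j = a := F_F a j
    have hFb : F q0 (j+1) = b := by
      funext i
      rw [F_apply_step, hFa, (hb i).symm]
    set q1 : Fin n → ZMod 2 := F b j with hq1def
    have hFb' : F q1 j = b := F_F b j
    have hFa' : F q1 (j+1) = a := by
      funext i
      rw [F_apply_step, hFb', hb i, add_assoc, add_self, add_zero]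
    have hq1q0 : ∀ i : Fin n, q1 i = q0 i + if (i:ℕ) = j then 1 else 0 := by
      intro i
      show b i + _ = a i + _ + _
      rw [hb i, add_right_comm]
    have hsum : (∑ i, q1 i) = (∑ i, q0 i) + 1 := by
      calc (∑ i, q1 i) = ∑ i, (q0 i + if (i:ℕ) = j then 1 else 0) :=
            Finset.sum_congr rfl fun i _ => hq1q0 i
        _ = (∑ i, q0 i) + ∑ i : Fin n, (if (i:ℕ) = j then (1:ZMod 2) else 0) :=
            Finset.sum_add_distrib
        _ = (∑ i, q0 i) + 1 := by rw [sum_ind hj]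
    have hcases : (∑ i, q0 i) = 0 ∨ (∑ i, q0 i) = 1 := by
      have : ∀ x : ZMod 2, x = 0 ∨ x = 1 := by decide
      exact this _
    have uniq : ∀ (y : {q : Fin n → ZMod 2 // ∑ i, q i = 0})
        (i : {q : Fin n → ZMod 2 // ∑ i, q i = 0}),
        s(a,b) ∈ (walk y.1 n le_rfl).edges → s(a,b) ∈ (walk i.1 n le_rfl).edges → y = i := by
      rintro y i hy hi
      obtain ⟨jy, hjy, hey⟩ := (mem_walk_iff y.1 _).mp hy
      obtain ⟨ji, hji, hei⟩ := (mem_walk_iff i.1 _).mp hi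
      exact Subtype.ext (key y.2 i.2 hjy hji (hey.trans hei.symm))
    rcases hcases with h0 | h0
    · refine ⟨⟨q0, h0⟩, ?_, fun y hy => uniq y ⟨q0, h0⟩ hy ?_⟩ <;>
        exact key_mem q0 h0 (by rw [hFa, hFb])
    · have h1 : (∑ i, q1 i) = 0 := by
        rw [hsum, h0, add_self]
      refine ⟨⟨q1, h1⟩, ?_, fun y hy => uniq y ⟨q1, h1⟩ hy ?_⟩ <;>
        exact key_mem q1 h1 (by rw [hFb', hFa', Sym2.eq_swap])
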